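/- Soundness of minimal logic with respect to epistemic realizability: if Γ ⊢ t : A is derivable in the simply typed lambda calculus, then ⟨A⟩(t^Γ) reduces in zero or more steps to ⋆, where t^Γ is t with each free variable x of type B in Γ replaced by the generator ✠B. -/

import Mathlib

/-! The metacalculus λ→m for minimal logic: untyped λ-calculus extended with
a success constant ⋆, a guard construct (M; N), and generators ✠𝐚 / verifiers ⟨𝐚⟩
for atomic types. Terms use de Bruijn indices. -/

/-- Simple types: atomic types and arrows. -/
inductive Ty : Type
  | atom : ℕ → Ty
  | arrow : Ty → Ty → Ty

/-- Metaterms of the metacalculus λ→m (de Bruijn indices). -/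
inductive Tm : Type
  | var : ℕ → Tm
  | lam : Tm → Tm
  | app : Tm → Tm → Tm
  | star : Tm
  | guard : Tm → Tm → Tm
  | gen : ℕ → Tm
  | verif : ℕ → Tm → Tm

namespace Tm

/-- Shift de Bruijn indices ≥ c by d. -/
def shift (d c : ℕ) : Tm → Tm
  | var n => if n < c then var n else var (n + d)
  | lam M => lam (shift d (c+1) M)
  | app M N => app (shift d c M) (shift d c N)
  | star => star
  | guard M N => guard (shift d c M) (shift d c N)
  | gen a => gen a
  | verif a M => verif a (shift d c M)

/-- Capture-avoiding substitution of the variable k by N. -/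
def subst (k : ℕ) (N : Tm) : Tm → Tm
  | var n => if n = k then N else if k < n then var (n - 1) else var n
  | lam M => lam (subst (k+1) (shift 1 0 N) M)
  | app M P => app (subst k N M) (subst k N P)
  | star => star
  | guard M P => guard (subst k N M) (subst k N P)
  | gen a => gen a
  | verif a M => verif a (subst k N M)

/-- Pure metaterms: only variables, abstractions and applications. -/
def Pure : Tm → Prop
  | var _ => True
  | lam M => Pure M
  | app M N => Pure M ∧ Pure N
  | _ => False

end Tm

/-- One-step reduction of λ→m, closed under arbitrary contexts. -/
inductive Step : Tm → Tm → Prop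
  | beta (M N : Tm) : Step (.app (.lam M) N) (Tm.subst 0 N M)
  | guardStar (M : Tm) : Step (.guard .star M) M
  | verifGen (a : ℕ) : Step (.verif a (.gen a)) .star
  | lam {M M'} : Step M M' → Step (.lam M) (.lam M')
  | appL {M M'} (N) : Step M M' → Step (.app M N) (.app M' N)
  | appR {N N'} (M) : Step N N' → Step (.app M N) (.app M N')
  | guardL {M M'} (N) : Step M M' → Step (.guard M N) (.guard M' N)
  | guardR {N N'} (M) : Step N N' → Step (.guard M N) (.guard M N')
  | verif {M M'} (a) : Step M M' → Step (.verif a M) (.verif a M')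

/-- Weak head reduction of λ→m: the rules closed under weak head contexts only. -/
inductive WStep : Tm → Tm → Prop
  | beta (M N : Tm) : WStep (.app (.lam M) N) (Tm.subst 0 N M)
  | guardStar (M : Tm) : WStep (.guard .star M) M
  | verifGen (a : ℕ) : WStep (.verif a (.gen a)) .star
  | appL {M M'} (N) : WStep M M' → WStep (.app M N) (.app M' N)
  | guardL {M M'} (N) : WStep M M' → WStep (.guard M N) (.guard M' N)
  | verif {M M'} (a) : WStep M M' → WStep (.verif a M) (.verif a M')

/-- β-reduction alone, closed under arbitrary contexts. -/
inductive BStep : Tm → Tm → Prop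
  | beta (M N : Tm) : BStep (.app (.lam M) N) (Tm.subst 0 N M)
  | lam {M M'} : BStep M M' → BStep (.lam M) (.lam M')
  | appL {M M'} (N) : BStep M M' → BStep (.app M N) (.app M' N)
  | appR {N N'} (M) : BStep N N' → BStep (.app M N) (.app M N')
  | guardL {M M'} (N) : BStep M M' → BStep (.guard M N) (.guard M' N)
  | guardR {N N'} (M) : BStep N N' → BStep (.guard M N) (.guard M N')
  | verif {M M'} (a) : BStep M M' → BStep (.verif a M) (.verif a M')

mutual
/-- The generator ✠A for an arbitrary simple type A. -/
def genT : Ty → Tm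
  | .atom a => .gen a
  | .arrow A B => .lam (.guard (verifT A (.var 0)) (genT B))
/-- The verifier ⟨A⟩M for an arbitrary simple type A applied to M. -/
def verifT : Ty → Tm → Tm
  | .atom a, M => .verif a M
  | .arrow A B, M => verifT B (.app M (genT A))
end



/-- Parallel (simultaneous) substitution of all free variables. -/
def liftSub (σ : ℕ → Tm) : ℕ → Tm :=
  fun n => match n with
  | 0 => .var 0
  | n+1 => Tm.shift 1 0 (σ n)

def substPar (σ : ℕ → Tm) : Tm → Tm
  | .var n => σ n
  | .lam M => .lam (substPar (liftSub σ) M)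
  | .app M N => .app (substPar σ M) (substPar σ N)
  | .star => .star
  | .guard M N => .guard (substPar σ M) (substPar σ N)
  | .gen a => .gen a
  | .verif a M => .verif a (substPar σ M)

/-- Typing judgments of the simply typed λ-calculus (de Bruijn). -/
inductive Typing : List Ty → Tm → Ty → Prop
  | var {Γ : List Ty} {n : ℕ} {A : Ty} :
      Γ[n]? = some A → Typing Γ (.var n) A
  | lam {Γ : List Ty} {M : Tm} {A B : Ty} :
      Typing (A :: Γ) M B → Typing Γ (.lam M) (.arrow A B)
  | app {Γ : List Ty} {M N : Tm} {A B : Ty} :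
      Typing Γ M (.arrow A B) → Typing Γ N A → Typing Γ (.app M N) B

/-- The generative substitution for Γ: each free variable x:B ∈ Γ is replaced
by the generator ✠B. -/
def genSub (Γ : List Ty) : ℕ → Tm :=
  fun n => match Γ[n]? with
  | some A => genT A
  | none => .var n

namespace Snd

/-- Fully closed metaterms: fixed by every shift and substitution. -/
def SClosed (M : Tm) : Prop :=
  (∀ d c, Tm.shift d c M = M) ∧ (∀ k N, Tm.subst k N M = M)

lemma genT_closed_aux (A : Ty) :
    ((∀ d c, Tm.shift d c (genT A) = genT A) ∧
     (∀ k N, Tm.subst k N (genT A) = genT A)) ∧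
    ((∀ d c M, Tm.shift d c (verifT A M) = verifT A (Tm.shift d c M)) ∧
     (∀ k N M, Tm.subst k N (verifT A M) = verifT A (Tm.subst k N M))) := by
  induction A with
  | atom a => simp [genT, verifT, Tm.shift, Tm.subst]
  | arrow A B ihA ihB =>
    obtain ⟨⟨gsA, gbA⟩, vsA, vbA⟩ := ihA
    obtain ⟨⟨gsB, gbB⟩, vsB, vbB⟩ := ihB
    refine ⟨⟨?_, ?_⟩, ?_, ?_⟩
    · intro d c
      simp [genT, Tm.shift, vsA, gsB]
    · intro k N
      simp [genT, Tm.subst, vbA, gbB]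
    · intro d c M
      simp [verifT, Tm.shift, vsB, gsA]
    · intro k N M
      simp [verifT, Tm.subst, vbB, gbA]

lemma SClosed_genT (A : Ty) : SClosed (genT A) :=
  ⟨(genT_closed_aux A).1.1, (genT_closed_aux A).1.2⟩

lemma subst_verifT (A : Ty) (k : ℕ) (N M : Tm) :
    Tm.subst k N (verifT A M) = verifT A (Tm.subst k N M) :=
  (genT_closed_aux A).2.2 k N M

lemma step_verifT (A : Ty) {M M' : Tm} (h : Step M M') :
    Step (verifT A M) (verifT A M') := by
  induction A generalizing M M' with
  | atom a => exact Step.verif a h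
  | arrow A B ihA ihB => exact ihB (Step.appL _ h)

lemma rtg_verifT (A : Ty) {M M' : Tm} (h : Relation.ReflTransGen Step M M') :
    Relation.ReflTransGen Step (verifT A M) (verifT A M') :=
  h.lift (verifT A) (fun _ _ hs => step_verifT A hs)

lemma rtg_guardL (N : Tm) {M M' : Tm} (h : Relation.ReflTransGen Step M M') :
    Relation.ReflTransGen Step (Tm.guard M N) (Tm.guard M' N) :=
  h.lift (fun x => Tm.guard x N) (fun _ _ hs => Step.guardL N hs)

/-- The logical relation (epistemic realizability). -/
def Real : Ty → Tm → Prop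
  | .atom a, M => Relation.ReflTransGen Step (.verif a M) .star
  | .arrow A B, M => ∀ N, SClosed N → Real A N → Real B (.app M N)

lemma real_step {A : Ty} {M M' : Tm} (h : Step M M') (hr : Real A M') : Real A M := by
  induction A generalizing M M' with
  | atom a => exact Relation.ReflTransGen.head (Step.verif a h) hr
  | arrow A B ihA ihB =>
    intro N hc hrn
    exact ihB (Step.appL N h) (hr N hc hrn)

lemma real_red {A : Ty} {M M' : Tm} (h : Relation.ReflTransGen Step M M')
    (hr : Real A M') : Real A M := by
  induction h using Relation.ReflTransGen.head_induction_on with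
  | refl => exact hr
  | head s _ ih => exact real_step s ih

lemma gen_real (A : Ty) :
    Real A (genT A) ∧
    ∀ M, Real A M → Relation.ReflTransGen Step (verifT A M) Tm.star := by
  induction A with
  | atom a =>
    constructor
    · exact Relation.ReflTransGen.single (Step.verifGen a)
    · intro M h; exact h
  | arrow A B ihA ihB =>
    obtain ⟨rA, vA⟩ := ihA
    obtain ⟨rB, vB⟩ := ihB
    constructor
    · intro N hc hrn
      apply real_red ?_ rB
      have e : Tm.subst 0 N (Tm.guard (verifT A (.var 0)) (genT B)) =
          Tm.guard (verifT A N) (genT B) := by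
        simp [Tm.subst, subst_verifT, (genT_closed_aux B).1.2]
      have h1 : Step (Tm.app (genT (.arrow A B)) N) (Tm.guard (verifT A N) (genT B)) := by
        rw [show genT (.arrow A B) = .lam (.guard (verifT A (.var 0)) (genT B)) from rfl]
        exact e ▸ Step.beta _ _
      refine Relation.ReflTransGen.head h1 ?_
      refine Relation.ReflTransGen.trans (rtg_guardL _ (vA N hrn)) ?_
      exact Relation.ReflTransGen.single (Step.guardStar _)
    · intro M hM
      exact vB _ (hM (genT A) (SClosed_genT A) rA)

lemma shift_substPar (t : Tm) :
    ∀ (σ : ℕ → Tm) (d c : ℕ),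
    (∀ n, (∀ d' c', Tm.shift d' c' (σ n) = σ n) ∨ (σ n = .var n ∧ n < c)) →
    Tm.shift d c (substPar σ t) = substPar σ t := by
  induction t with
  | var n =>
    intro σ d c h
    rcases h n with hcl | ⟨he, hlt⟩
    · exact hcl d c
    · rw [substPar, he, Tm.shift, if_pos hlt]
  | lam M ih =>
    intro σ d c h
    have hh : ∀ n, (∀ d' c', Tm.shift d' c' (liftSub σ n) = liftSub σ n) ∨
        (liftSub σ n = .var n ∧ n < c+1) := by
      intro n
      match n with
      | 0 => exact Or.inr ⟨rfl, Nat.succ_pos c⟩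
      | n+1 =>
        rcases h n with hcl | ⟨he, hlt⟩
        · left
          intro d' c'
          show Tm.shift d' c' (Tm.shift 1 0 (σ n)) = Tm.shift 1 0 (σ n)
          rw [hcl 1 0]
          exact hcl d' c'
        · right
          constructor
          · show Tm.shift 1 0 (σ n) = _
            rw [he, Tm.shift, if_neg (Nat.not_lt_zero n)]
          · exact Nat.succ_lt_succ hlt
    show Tm.lam (Tm.shift d (c+1) (substPar (liftSub σ) M)) = Tm.lam (substPar (liftSub σ) M)
    rw [ih (liftSub σ) d (c+1) hh]
  | app M N ihM ihN =>
    intro σ d c h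
    show Tm.app (Tm.shift d c (substPar σ M)) (Tm.shift d c (substPar σ N)) =
      Tm.app (substPar σ M) (substPar σ N)
    rw [ihM σ d c h, ihN σ d c h]
  | star => intro σ d c h; rfl
  | guard M N ihM ihN =>
    intro σ d c h
    show Tm.guard (Tm.shift d c (substPar σ M)) (Tm.shift d c (substPar σ N)) =
      Tm.guard (substPar σ M) (substPar σ N)
    rw [ihM σ d c h, ihN σ d c h]
  | gen a => intro σ d c h; rfl
  | verif a M ih =>
    intro σ d c h
    show Tm.verif a (Tm.shift d c (substPar σ M)) = Tm.verif a (substPar σ M)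
    rw [ih σ d c h]

lemma subst_substPar_fix (t : Tm) :
    ∀ (σ : ℕ → Tm) (k : ℕ) (N : Tm),
    (∀ n, SClosed (σ n) ∨ (σ n = .var n ∧ n < k)) →
    Tm.subst k N (substPar σ t) = substPar σ t := by
  induction t with
  | var n =>
    intro σ k N h
    rcases h n with hcl | ⟨he, hlt⟩
    · exact hcl.2 k N
    · rw [substPar, he, Tm.subst, if_neg (Nat.ne_of_lt hlt), if_neg (by omega)]
  | lam M ih =>
    intro σ k N h
    have hh : ∀ n, SClosed (liftSub σ n) ∨ (liftSub σ n = .var n ∧ n < k+1) := by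
      intro n
      match n with
      | 0 => exact Or.inr ⟨rfl, Nat.succ_pos k⟩
      | n+1 =>
        rcases h n with hcl | ⟨he, hlt⟩
        · left
          constructor
          · intro d' c'
            show Tm.shift d' c' (Tm.shift 1 0 (σ n)) = Tm.shift 1 0 (σ n)
            rw [hcl.1 1 0]
            exact hcl.1 d' c'
          · intro k' N'
            show Tm.subst k' N' (Tm.shift 1 0 (σ n)) = Tm.shift 1 0 (σ n)
            rw [hcl.1 1 0]
            exact hcl.2 k' N'
        · right
          constructor
          · show Tm.shift 1 0 (σ n) = _
            rw [he, Tm.shift, if_neg (Nat.not_lt_zero n)]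
          · exact Nat.succ_lt_succ hlt
    show Tm.lam (Tm.subst (k+1) (Tm.shift 1 0 N) (substPar (liftSub σ) M)) =
      Tm.lam (substPar (liftSub σ) M)
    rw [ih (liftSub σ) (k+1) (Tm.shift 1 0 N) hh]
  | app M N ihM ihN =>
    intro σ k N' h
    show Tm.app (Tm.subst k N' (substPar σ M)) (Tm.subst k N' (substPar σ N)) =
      Tm.app (substPar σ M) (substPar σ N)
    rw [ihM σ k N' h, ihN σ k N' h]
  | star => intro σ k N h; rfl
  | guard M N ihM ihN =>
    intro σ k N' h
    show Tm.guard (Tm.subst k N' (substPar σ M)) (Tm.subst k N' (substPar σ N)) =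
      Tm.guard (substPar σ M) (substPar σ N)
    rw [ihM σ k N' h, ihN σ k N' h]
  | gen a => intro σ k N h; rfl
  | verif a M ih =>
    intro σ k N h
    show Tm.verif a (Tm.subst k N (substPar σ M)) = Tm.verif a (substPar σ M)
    rw [ih σ k N h]

lemma SClosed_substPar (t : Tm) (σ : ℕ → Tm) (h : ∀ n, SClosed (σ n)) :
    SClosed (substPar σ t) :=
  ⟨fun d c => shift_substPar t σ d c (fun n => Or.inl (h n).1),
   fun k N => subst_substPar_fix t σ k N (fun n => Or.inl (h n))⟩

/-- σ with k extra bound variables on top. -/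
def upn (k : ℕ) (σ : ℕ → Tm) : ℕ → Tm :=
  fun n => if n < k then .var n else σ (n - k)

/-- Insert N at position k of σ (after k bound variables). -/
def insAt (k : ℕ) (N : Tm) (σ : ℕ → Tm) : ℕ → Tm :=
  fun n => if n < k then .var n else if n = k then N else σ (n - k - 1)

lemma liftSub_upn (σ : ℕ → Tm) (hσ : ∀ n, SClosed (σ n)) (k : ℕ) :
    liftSub (upn k σ) = upn (k+1) σ := by
  funext n
  match n with
  | 0 =>
    show Tm.var 0 = _
    rw [upn, if_pos (Nat.succ_pos k)]
  | n+1 =>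
    show Tm.shift 1 0 (upn k σ n) = upn (k+1) σ (n+1)
    simp only [upn]
    by_cases hn : n < k
    · rw [if_pos hn, if_pos (show n+1 < k+1 by omega), Tm.shift,
        if_neg (Nat.not_lt_zero n)]
    · rw [if_neg hn, if_neg (show ¬ n+1 < k+1 by omega), (hσ (n-k)).1 1 0]
      congr 1
      omega

lemma liftSub_insAt (σ : ℕ → Tm) (N : Tm) (hσ : ∀ n, SClosed (σ n))
    (hN : SClosed N) (k : ℕ) :
    liftSub (insAt k N σ) = insAt (k+1) N σ := by
  funext n
  match n with
  | 0 =>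
    show Tm.var 0 = _
    rw [insAt, if_pos (Nat.succ_pos k)]
  | n+1 =>
    show Tm.shift 1 0 (insAt k N σ n) = insAt (k+1) N σ (n+1)
    simp only [insAt]
    by_cases hn : n < k
    · rw [if_pos hn, if_pos (show n+1 < k+1 by omega), Tm.shift,
        if_neg (Nat.not_lt_zero n)]
    · by_cases he : n = k
      · rw [if_neg hn, if_neg (show ¬ n+1 < k+1 by omega), if_pos he,
          if_pos (show n+1 = k+1 by omega), hN.1 1 0]
      · rw [if_neg hn, if_neg (show ¬ n+1 < k+1 by omega), if_neg he,
          if_neg (show ¬ n+1 = k+1 by omega), (hσ (n-k-1)).1 1 0]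
        congr 2
        omega

lemma subst_substPar_upn (t : Tm) :
    ∀ (σ : ℕ → Tm) (N : Tm) (k : ℕ),
    (∀ n, SClosed (σ n)) → SClosed N →
    Tm.subst k N (substPar (upn (k+1) σ) t) = substPar (insAt k N σ) t := by
  induction t with
  | var n =>
    intro σ N k hσ hN
    show Tm.subst k N (upn (k+1) σ n) = insAt k N σ n
    simp only [upn, insAt]
    rcases Nat.lt_trichotomy n k with h1 | h1 | h1
    · rw [if_pos (show n < k+1 by omega), if_pos h1]
      show Tm.subst k N (Tm.var n) = Tm.var n
      simp only [Tm.subst]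
      rw [if_neg (show ¬ n = k by omega), if_neg (show ¬ k < n by omega)]
    · subst h1
      rw [if_pos (Nat.lt_succ_self n), if_neg (lt_irrefl n), if_pos rfl]
      show Tm.subst n N (Tm.var n) = N
      simp [Tm.subst]
    · rw [if_neg (show ¬ n < k+1 by omega), if_neg (show ¬ n < k by omega),
        if_neg (show ¬ n = k by omega), (hσ (n - (k+1))).2 k N]
      congr 1
  | lam M ih =>
    intro σ N k hσ hN
    show Tm.lam (Tm.subst (k+1) (Tm.shift 1 0 N) (substPar (liftSub (upn (k+1) σ)) M))
        = Tm.lam (substPar (liftSub (insAt k N σ)) M)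
    rw [hN.1 1 0, liftSub_upn σ hσ (k+1), ih σ N (k+1) hσ hN,
      liftSub_insAt σ N hσ hN k]
  | app M P ihM ihP =>
    intro σ N k hσ hN
    show Tm.app _ _ = Tm.app _ _
    rw [ihM σ N k hσ hN, ihP σ N k hσ hN]
  | star => intro σ N k hσ hN; rfl
  | guard M P ihM ihP =>
    intro σ N k hσ hN
    show Tm.guard _ _ = Tm.guard _ _
    rw [ihM σ N k hσ hN, ihP σ N k hσ hN]
  | gen a => intro σ N k hσ hN; rfl
  | verif a M ih =>
    intro σ N k hσ hN
    show Tm.verif a _ = Tm.verif a _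
    rw [ih σ N k hσ hN]

lemma liftSub_eq_upn (σ : ℕ → Tm) (hσ : ∀ n, SClosed (σ n)) :
    liftSub σ = upn 1 σ := by
  have hσ0 : σ = upn 0 σ := by
    funext n
    show σ n = if n < 0 then Tm.var n else σ (n - 0)
    rw [if_neg (Nat.not_lt_zero n), Nat.sub_zero]
  conv_lhs => rw [hσ0]
  exact liftSub_upn σ hσ 0

def sigmaFix (Γ : List Ty) : ℕ → Tm :=
  fun n => match Γ[n]? with
  | some A => genT A
  | none => genT (.atom 0)

lemma sigmaFix_eq_some {Γ : List Ty} {n : ℕ} {A : Ty} (h : Γ[n]? = some A) :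
    sigmaFix Γ n = genT A := by
  unfold sigmaFix
  rw [h]

lemma genSub_eq_some {Γ : List Ty} {n : ℕ} {A : Ty} (h : Γ[n]? = some A) :
    genSub Γ n = genT A := by
  unfold genSub
  rw [h]

lemma SClosed_sigmaFix (Γ : List Ty) (n : ℕ) : SClosed (sigmaFix Γ n) := by
  unfold sigmaFix
  cases Γ[n]? with
  | some B => exact SClosed_genT B
  | none => exact SClosed_genT (.atom 0)

lemma substPar_agree {Γ : List Ty} {t : Tm} {A : Ty} (h : Typing Γ t A) :
    ∀ (σ σ' : ℕ → Tm), (∀ n, n < Γ.length → σ n = σ' n) →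
    substPar σ t = substPar σ' t := by
  induction h with
  | var hget =>
    intro σ σ' hag
    exact hag _ (by obtain ⟨h1, _⟩ := List.getElem?_eq_some_iff.mp hget; exact h1)
  | lam _ ih =>
    intro σ σ' hag
    show Tm.lam _ = Tm.lam _
    rw [ih (liftSub σ) (liftSub σ') ?_]
    intro n hn
    match n with
    | 0 => rfl
    | n+1 =>
      show Tm.shift 1 0 (σ n) = Tm.shift 1 0 (σ' n)
      rw [hag n (by simpa using Nat.lt_of_succ_lt_succ hn)]
  | app _ _ ihM ihN =>
    intro σ σ' hag
    show Tm.app _ _ = Tm.app _ _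
    rw [ihM σ σ' hag, ihN σ σ' hag]

lemma sound_aux {Γ : List Ty} {t : Tm} {A : Ty} (h : Typing Γ t A) :
    ∀ (σ : ℕ → Tm), (∀ n, SClosed (σ n)) →
    (∀ n B, Γ[n]? = some B → Real B (σ n)) →
    Real A (substPar σ t) := by
  induction h with
  | @var Γ n A hget =>
    intro σ hσ hr
    exact hr n A hget
  | @lam Γ M A B hM ih =>
    intro σ hσ hr
    show Real (.arrow A B) (.lam (substPar (liftSub σ) M))
    intro N hcN hrN
    apply real_step (Step.beta _ _)
    rw [liftSub_eq_upn σ hσ]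
    have e0 : (0 : ℕ) + 1 = 1 := rfl
    rw [← e0, subst_substPar_upn M σ N 0 hσ hcN]
    apply ih (insAt 0 N σ) ?_ ?_
    · intro n
      match n with
      | 0 => exact hcN
      | n+1 =>
        show SClosed (if n+1 < 0 then _ else if n+1 = 0 then N else σ (n+1-0-1))
        rw [if_neg (by omega), if_neg (by omega)]
        exact hσ n
    · intro n C hget
      match n with
      | 0 =>
        simp only [List.getElem?_cons_zero] at hget
        cases hget
        exact hrN
      | n+1 =>
        show Real C (if n+1 < 0 then _ else if n+1 = 0 then N else σ (n+1-0-1))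
        rw [if_neg (by omega), if_neg (by omega)]
        exact hr n C (by simpa using hget)
  | @app Γ M N A B hM hN ihM ihN =>
    intro σ hσ hr
    have h1 : Real (.arrow A B) (substPar σ M) := ihM σ hσ hr
    exact h1 (substPar σ N) (SClosed_substPar N σ hσ) (ihN σ hσ hr)

end Snd

/-- Soundness: if Γ ⊢ t : A in the simply typed λ-calculus then
⟨A⟩(t^Γ) ↠ ⋆, where t^Γ substitutes generators for the variables of Γ. -/
theorem soundness {Γ : List Ty} {t : Tm} {A : Ty} (h : Typing Γ t A) :
    Relation.ReflTransGen Step (verifT A (substPar (genSub Γ) t)) Tm.star := by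
  have hclosed : ∀ n, Snd.SClosed (Snd.sigmaFix Γ n) := fun n => Snd.SClosed_sigmaFix Γ n
  have hreal : ∀ n B, Γ[n]? = some B → Snd.Real B (Snd.sigmaFix Γ n) := by
    intro n B hget
    rw [Snd.sigmaFix_eq_some hget]
    exact (Snd.gen_real B).1
  have heq : substPar (genSub Γ) t = substPar (Snd.sigmaFix Γ) t := by
    apply Snd.substPar_agree h
    intro n hn
    have hB : Γ[n]? = some (Γ[n]) := List.getElem?_eq_getElem hn
    rw [Snd.genSub_eq_some hB, Snd.sigmaFix_eq_some hB]
  rw [heq]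
  exact (Snd.gen_real A).2 _ (Snd.sound_aux h _ hclosed hreal)
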